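/- arXiv:1405.2560 — 2 statements merged into one kernel-verified Lean document; each statement's English description precedes it below -/
import Mathlib

section
/- For every permutation π, g(f(π)) = π, where f maps π to the word of run indices of its letters and g maps a word to the concatenation of the increasing position-lists of its letters 1, 2, ..., max. -/
/-- Two lists of naturals are order-isomorphic: same length and same relative order. -/
def OrdIso (a b : List ℕ) : Prop :=
  a.length = b.length ∧
    ∀ i, i < a.length → ∀ j, j < a.length →
      (a.getD i 0 < a.getD j 0 ↔ b.getD i 0 < b.getD j 0)

instance (a b : List ℕ) : Decidable (OrdIso a b) := by unfold OrdIso; infer_instance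

/-- `σ` occurs as a pattern in `π`: some subsequence of `π` is order-isomorphic to `σ`. -/
def occursIn (σ π : List ℕ) : Prop := ∃ s ∈ π.sublists, OrdIso σ s

instance (σ π : List ℕ) : Decidable (occursIn σ π) := by unfold occursIn; infer_instance

/-- `l` is a permutation of `1, …, l.length`. -/
def IsPermList (l : List ℕ) : Prop := l.Perm ((List.range l.length).map (· + 1))

/-- The number of descents of `l` (positions `i` with `l i > l (i+1)`, 0-based). -/
def des (l : List ℕ) : ℕ :=
  ((List.range (l.length - 1)).filter (fun i => decide (l.getD (i+1) 0 < l.getD i 0))).length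

/-- `d_π(c)`: one plus the number of descents of `π` preceding the letter `c`. -/
def dval (l : List ℕ) (c : ℕ) : ℕ :=
  1 + ((List.range (l.idxOf c)).filter (fun i => decide (l.getD (i+1) 0 < l.getD i 0))).length

/-- The word `f(π) = d_π(1) d_π(2) ⋯ d_π(n)`. -/
def fword (l : List ℕ) : List ℕ := (List.range l.length).map (fun i => dval l (i+1))

/-- The largest letter of the word `w`. -/
def maxLetter (w : List ℕ) : ℕ := w.foldr max 0

/-- `p_w(j)`: positions (1-based, increasing) of the letter `j` in `w`. -/
def posList (w : List ℕ) (j : ℕ) : List ℕ :=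
  ((List.range w.length).filter (fun i => decide (w.getD i 0 = j))).map (· + 1)

/-- `g(w)`: the concatenation of the position lists `p_w(1), …, p_w(max w)`. -/
def gperm (w : List ℕ) : List ℕ := (List.range (maxLetter w)).flatMap (fun j => posList w (j+1))

/-- Membership in the poset 𝒜̂: positive letters, every letter in `{1,…,max w}` occurs,
and the rightmost occurrence of each `i < max w` is preceded by an occurrence of `i+1`. -/
def InAhat (w : List ℕ) : Prop :=
  (∀ x ∈ w, 1 ≤ x) ∧
  (∀ i, i < maxLetter w → i + 1 ∈ w) ∧
  (∀ i, i < maxLetter w - 1 → ∃ t, t < w.length ∧ w.getD t 0 = i + 1 ∧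
     (∀ s, s < w.length → t < s → w.getD s 0 ≠ i + 1) ∧ ∃ u, u < t ∧ w.getD u 0 = i + 2)

instance (w : List ℕ) : Decidable (InAhat w) := by unfold InAhat; infer_instance

/-- All permutations (as lists on `1..k`) of every length `k ≤ n`. -/
def permsUpTo (n : ℕ) : List (List ℕ) :=
  (List.range (n+1)).flatMap (fun k => ((List.range k).map (· + 1)).permutations)

/-- The interval `[a,b]` in the pattern containment poset, as a list. -/
def intervalList (a b : List ℕ) : List (List ℕ) :=
  (permsUpTo b.length).filter (fun z => decide (occursIn a z ∧ occursIn z b))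

/-- `μ` is the Möbius function of the poset of permutations under pattern containment:
`μ(a,a) = 1` and, for `a < b`, `∑_{a ≤ z ≤ b} μ(a,z) = 0`. -/
def MoebiusOn (μ : List ℕ → List ℕ → ℤ) : Prop :=
  (∀ a, μ a a = 1) ∧
  ∀ a b, IsPermList a → IsPermList b → occursIn a b → a ≠ b →
    ((intervalList a b).map (μ a)).sum = 0

/-- All lists of length `n` with entries in `{0, …, k-1}`. -/
def listsOf (n k : ℕ) : List (List ℕ) :=
  (List.range n).foldr (fun _ acc => (List.range k).flatMap (fun a => acc.map (a :: ·))) [[]]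

/-- The letters of `π` in the nonzero positions of `η`. -/
def embOcc (η π : List ℕ) : List ℕ :=
  ((List.range π.length).filter (fun i => decide (η.getD i 0 ≠ 0))).map (fun i => π.getD i 0)

/-- `η` is an embedding of `σ` in `π`: a sequence of length `|π|` whose nonzero positions
are the positions of an occurrence of `σ` in `π` and whose nonzero letters spell `σ`. -/
def IsEmbedding (η σ π : List ℕ) : Prop :=
  η.length = π.length ∧ η.filter (fun x => decide (x ≠ 0)) = σ ∧ OrdIso σ (embOcc η π)

/-- `η` is a normal embedding: nonzero at every letter of `π` lying in the tail of an
adjacency (i.e. every position whose predecessor holds the previous value). -/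
def IsNormalEmbedding (η σ π : List ℕ) : Prop :=
  IsEmbedding η σ π ∧
    ∀ i, i < π.length → 0 < i → π.getD i 0 = π.getD (i-1) 0 + 1 → η.getD i 0 ≠ 0

instance (η σ π : List ℕ) : Decidable (IsNormalEmbedding η σ π) := by
  unfold IsNormalEmbedding IsEmbedding; infer_instance

/-- The number of normal embeddings of `σ` in `π`. -/
def normalCount (σ π : List ℕ) : ℕ :=
  ((listsOf π.length (σ.length + 1)).filter (fun η => decide (IsNormalEmbedding η σ π))).length

/-- The total number of letters in all tails of all adjacencies of `π`;
equivalently, the number of adjacency pairs of `π`. -/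
def tailCount (π : List ℕ) : ℕ :=
  ((List.range π.length).filter (fun i => decide (0 < i ∧ π.getD i 0 = π.getD (i-1) 0 + 1))).length

/-- The number of occurrences of `σ` as a pattern in `π`. -/
def occCount (σ π : List ℕ) : ℕ :=
  ((List.range π.length).sublists.filter
    (fun s => decide (OrdIso σ (s.map (fun i => π.getD i 0))))).length

/-- All words of length `n` on the alphabet `{1, …, k}`. -/
def wordsOf (n k : ℕ) : List (List ℕ) := (listsOf n k).map (List.map (· + 1))

/-- All permutations of `1, …, n`, as lists. -/
def permsOfLen (n : ℕ) : List (List ℕ) := ((List.range n).map (· + 1)).permutations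


/-- Number of descents among the first `m` positions. -/
def desB (l : List ℕ) (m : ℕ) : ℕ :=
  ((List.range m).filter (fun i => decide (l.getD (i+1) 0 < l.getD i 0))).length

lemma dval_eq_desB (l : List ℕ) (c : ℕ) : dval l c = 1 + desB l (l.idxOf c) := rfl

lemma desB_mono (l : List ℕ) {a b : ℕ} (h : a ≤ b) : desB l a ≤ desB l b :=
  List.Sublist.length_le (List.Sublist.filter _ (List.range_sublist.mpr h))

lemma desB_succ (l : List ℕ) (m : ℕ) :
    desB l (m+1) = desB l m + (if l.getD (m+1) 0 < l.getD m 0 then 1 else 0) := by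
  unfold desB
  rw [List.range_succ, List.filter_append, List.length_append, List.filter_singleton]
  by_cases h : l[m+1]?.getD 0 < l[m]?.getD 0 <;> simp [List.getD, h]

/-- If there are no descents between `i` and `i'`, values don't decrease. -/
lemma getD_le_of_desB_eq (π : List ℕ) :
    ∀ i', ∀ i, i ≤ i' → desB π i = desB π i' → π.getD i 0 ≤ π.getD i' 0 := by
  intro i'
  induction i' with
  | zero => intro i hi _; interval_cases i; rfl
  | succ k ih =>
    intro i hi hd
    rcases Nat.eq_or_lt_of_le hi with h | h
    · subst h; rfl
    · have hik : i ≤ k := by omega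
      have hs := desB_succ π k
      have h1 : desB π i ≤ desB π k := desB_mono π hik
      have h2 : desB π i = desB π k := by
        have := desB_mono π (Nat.le_succ k); omega
      have hnd : ¬ (π.getD (k+1) 0 < π.getD k 0) := by
        by_contra hc
        rw [if_pos hc] at hs; omega
      exact le_trans (ih i hik h2) (by omega)

lemma mem_posList_iff (w : List ℕ) (j c : ℕ) :
    c ∈ posList w j ↔ 1 ≤ c ∧ c - 1 < w.length ∧ w.getD (c-1) 0 = j := by
  unfold posList
  simp only [List.mem_map, List.mem_filter, List.mem_range, decide_eq_true_eq]
  constructor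
  · rintro ⟨i, ⟨hi, hw⟩, rfl⟩
    refine ⟨by omega, by omega, by simpa using hw⟩
  · rintro ⟨h1, h2, h3⟩
    exact ⟨c - 1, ⟨h2, h3⟩, by omega⟩

lemma posList_pairwise (w : List ℕ) (j : ℕ) : (posList w j).Pairwise (· < ·) := by
  unfold posList
  rw [List.pairwise_map]
  exact ((List.pairwise_lt_range (n := w.length)).sublist List.filter_sublist).imp
    (fun h => by omega)

lemma posList_nodup (w : List ℕ) (j : ℕ) : (posList w j).Nodup :=
  (posList_pairwise w j).imp (fun h => by omega)

lemma le_maxLetter {w : List ℕ} {x : ℕ} (hx : x ∈ w) : x ≤ maxLetter w := by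
  induction w with
  | nil => simp at hx
  | cons a t ih =>
    unfold maxLetter at *
    rcases List.mem_cons.mp hx with rfl | h
    · simp
    · exact le_trans (ih h) (by simp)

lemma sum_indicator (m t : ℕ) :
    ((List.range m).map (fun j => if t = j then 1 else 0)).sum
      = if t < m then 1 else 0 := by
  induction m with
  | zero => simp
  | succ k ih =>
    rw [List.range_succ, List.map_append, List.sum_append, ih]
    by_cases h : t = k
    · subst h; simp
    · simp [h]
      split_ifs <;> omega

/-- for every permutation `π`, `g(f(π)) = π`. -/
theorem gperm_fword (π : List ℕ) (hπ : IsPermList π) : gperm (fword π) = π := by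
  classical
  have hπ' : π.Perm ((List.range π.length).map (· + 1)) := hπ
  set n := π.length with hn
  set w := fword π with hw
  have hwlen : w.length = n := by simp [hw, fword]; rfl
  have hmem : ∀ c, c ∈ π ↔ 1 ≤ c ∧ c ≤ n := by
    intro c
    rw [hπ'.mem_iff]
    simp only [List.mem_map, List.mem_range]
    constructor
    · rintro ⟨i, hi, rfl⟩; omega
    · rintro ⟨h1, h2⟩; exact ⟨c - 1, by omega, by omega⟩
  have hnodup : π.Nodup := by
    have h2 : ((List.range n).map (· + 1)).Nodup :=
      (List.nodup_range (n := n)).map (fun a b h => by omega)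
    exact hπ'.nodup_iff.mpr h2
  have hgetD_idx : ∀ c ∈ π, π.getD (π.idxOf c) 0 = c := by
    intro c hc
    have h := List.idxOf_lt_length_iff.mpr hc
    rw [List.getD_eq_getElem _ _ h]
    exact List.getElem_idxOf h
  have hfw : ∀ c, 1 ≤ c → c ≤ n → w.getD (c-1) 0 = dval π c := by
    intro c h1 h2
    have hlt : c - 1 < w.length := by omega
    rw [List.getD_eq_getElem _ _ hlt]
    have : w[c-1] = dval π ((c-1)+1) := by
      simp only [hw, fword, List.getElem_map, List.getElem_range]
    rw [this]; congr 1; omega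
  have hdval_pos : ∀ c, 1 ≤ dval π c := fun c => Nat.le_add_right 1 _
  have hmemB : ∀ j c, c ∈ posList w j ↔ (1 ≤ c ∧ c ≤ n ∧ dval π c = j) := by
    intro j c
    rw [mem_posList_iff, hwlen]
    constructor
    · rintro ⟨h1, h2, h3⟩
      exact ⟨h1, by omega, by rw [← hfw c h1 (by omega)]; exact h3⟩
    · rintro ⟨h1, h2, h3⟩
      exact ⟨h1, by omega, by rw [hfw c h1 h2]; exact h3⟩
  have key_lt : ∀ c ∈ π, ∀ c' ∈ π, dval π c < dval π c' → π.idxOf c < π.idxOf c' := by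
    intro c hc c' hc' hd
    by_contra h
    push_neg at h
    have := desB_mono π h
    rw [dval_eq_desB, dval_eq_desB] at hd
    omega
  have key_eq : ∀ c ∈ π, ∀ c' ∈ π, dval π c = dval π c' → c < c' →
      π.idxOf c < π.idxOf c' := by
    intro c hc c' hc' hd hcc
    by_contra h
    push_neg at h
    have hle : π.getD (π.idxOf c') 0 ≤ π.getD (π.idxOf c) 0 :=
      getD_le_of_desB_eq π _ _ h (by rw [dval_eq_desB, dval_eq_desB] at hd; omega)
    rw [hgetD_idx c hc, hgetD_idx c' hc'] at hle
    omega
  have hperm : (gperm w).Perm π := by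
    rw [List.perm_iff_count]
    intro c
    have hcount_pi : π.count c = if 1 ≤ c ∧ c ≤ n then 1 else 0 := by
      split_ifs with h
      · exact List.count_eq_one_of_mem hnodup ((hmem c).mpr h)
      · exact List.count_eq_zero_of_not_mem (fun hc => h ((hmem c).mp hc))
    rw [gperm, List.count_flatMap]
    by_cases hc : 1 ≤ c ∧ c ≤ n
    · have hd1 := hdval_pos c
      have hdm : dval π c - 1 < maxLetter w := by
        have hmemw : dval π c ∈ w := by
          rw [← hfw c hc.1 hc.2]
          have hlt : c - 1 < w.length := by omega
          rw [List.getD_eq_getElem _ _ hlt]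
          exact List.getElem_mem _
        have := le_maxLetter hmemw
        omega
      have hmapeq : (List.map (List.count c ∘ fun j => posList w (j+1))
            (List.range (maxLetter w)))
          = (List.range (maxLetter w)).map (fun j => if dval π c - 1 = j then 1 else 0) := by
        apply List.map_congr_left
        intro j hj
        simp only [Function.comp_apply]
        by_cases hj' : dval π c = j + 1
        · rw [if_pos (by omega)]
          exact List.count_eq_one_of_mem (posList_nodup w (j+1))
            ((hmemB (j+1) c).mpr ⟨hc.1, hc.2, hj'⟩)
        · rw [if_neg (by omega)]
          exact List.count_eq_zero_of_not_mem (fun hmm => hj' ((hmemB (j+1) c).mp hmm).2.2)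
      rw [hmapeq, sum_indicator, if_pos hdm, hcount_pi, if_pos hc]
    · rw [hcount_pi, if_neg hc]
      apply List.sum_eq_zero
      intro x hx
      simp only [List.mem_map] at hx
      obtain ⟨j, hj, rfl⟩ := hx
      simp only [Function.comp_apply]
      refine List.count_eq_zero_of_not_mem (fun hmm => hc ?_)
      have h := (hmemB (j+1) c).mp hmm
      exact ⟨h.1, h.2.1⟩
  let R : ℕ → ℕ → Prop := fun a b => π.idxOf a < π.idxOf b
  haveI : IsAntisymm ℕ R := ⟨fun a b h1 h2 => absurd (h1.trans h2) (lt_irrefl _)⟩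
  have hsg : List.Pairwise R (gperm w) := by
    rw [gperm, List.pairwise_flatMap]
    constructor
    · intro j hj
      refine (posList_pairwise w (j+1)).imp_of_mem ?_
      intro a b ha hb hab
      have ha' := (hmemB (j+1) a).mp ha
      have hb' := (hmemB (j+1) b).mp hb
      exact key_eq a ((hmem a).mpr ⟨ha'.1, ha'.2.1⟩) b ((hmem b).mpr ⟨hb'.1, hb'.2.1⟩)
        (ha'.2.2.trans hb'.2.2.symm) hab
    · refine List.pairwise_lt_range.imp_of_mem ?_
      intro a b _ _ hab x hx y hy
      have hx' := (hmemB (a+1) x).mp hx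
      have hy' := (hmemB (b+1) y).mp hy
      refine key_lt x ((hmem x).mpr ⟨hx'.1, hx'.2.1⟩) y ((hmem y).mpr ⟨hy'.1, hy'.2.1⟩) ?_
      have e1 := hx'.2.2
      have e2 := hy'.2.2
      omega
  have hsp : List.Pairwise R π := by
    rw [List.pairwise_iff_getElem]
    intro i j hi hj hij
    show π.idxOf π[i] < π.idxOf π[j]
    rw [hnodup.idxOf_getElem i hi, hnodup.idxOf_getElem j hj]
    exact hij
  exact List.Perm.eq_of_pairwise (fun a b _ _ h1 h2 => absurd (h1.trans h2) (lt_irrefl _)) hsg hsp hperm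
end

section
/- Let π be a permutation of length n > 2 with exactly one descent. If π begins with the letters 1,2 in positions 1,2, or ends with the letters n−1, n in positions n−1, n, then μ(1, π) = 0. -/
section Aux
open List

theorem ordIso_refl (a : List ℕ) : OrdIso a a := ⟨rfl, fun _ _ _ _ => Iff.rfl⟩

theorem ordIso_symm {a b : List ℕ} (h : OrdIso a b) : OrdIso b a :=
  ⟨h.1.symm, fun i hi j hj => (h.2 i (h.1 ▸ hi) j (h.1 ▸ hj)).symm⟩

theorem ordIso_trans {a b c : List ℕ} (h1 : OrdIso a b) (h2 : OrdIso b c) : OrdIso a c :=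
  ⟨h1.1.trans h2.1, fun i hi j hj =>
    (h1.2 i hi j hj).trans (h2.2 i (h1.1 ▸ hi) j (h1.1 ▸ hj))⟩

theorem occursIn_of_ordIso_sublist {σ s π : List ℕ} (h : OrdIso σ s) (hs : s <+ π) :
    occursIn σ π := ⟨s, mem_sublists.2 hs, h⟩

theorem occursIn_self (z : List ℕ) : occursIn z z :=
  occursIn_of_ordIso_sublist (ordIso_refl z) (Sublist.refl z)

theorem occursIn_length_le {σ π : List ℕ} (h : occursIn σ π) : σ.length ≤ π.length := by
  obtain ⟨s, hs, hiso⟩ := h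
  rw [hiso.1]
  exact (mem_sublists.1 hs).length_le

theorem ordIso_map (s : List ℕ) (g : ℕ → ℕ)
    (hg : ∀ x ∈ s, ∀ y ∈ s, (x < y ↔ g x < g y)) : OrdIso s (s.map g) := by
  refine ⟨(s.length_map g).symm, fun i hi j hj => ?_⟩
  rw [getD_eq_getElem s 0 hi, getD_eq_getElem s 0 hj,
    getD_eq_getElem (s.map g) 0 (by simpa using hi), getD_eq_getElem (s.map g) 0 (by simpa using hj),
    getElem_map, getElem_map]
  exact hg _ (getElem_mem hi) _ (getElem_mem hj)

theorem map_get_sublist' {l : List ℕ} {is : List (Fin l.length)} (h : is.Pairwise (· < ·)) :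
    is.map l.get <+ l := by
  have e : is.map l.get = is.map (l[·]) := map_congr_left (fun i _ => by simp)
  rw [e]
  exact map_getElem_sublist h

theorem ordIso_sublist_transport {y t s : List ℕ} (h : OrdIso y t) (hs : s <+ y) :
    ∃ t', t' <+ t ∧ OrdIso s t' := by
  obtain ⟨is, hseq, hpair⟩ := sublist_eq_map_getElem hs
  have hl : y.length = t.length := h.1
  refine ⟨(is.map (Fin.cast hl)).map t.get, map_get_sublist' ?_, ?_⟩
  · exact (pairwise_map.2 (hpair.imp (fun hab => hab)))
  · have hlen1 : s.length = is.length := by rw [hseq, length_map]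
    have hlen2 : ((is.map (Fin.cast hl)).map t.get).length = is.length := by
      rw [length_map, length_map]
    refine ⟨by rw [hlen1, hlen2], fun i hi j hj => ?_⟩
    have hi' : i < is.length := hlen1 ▸ hi
    have hj' : j < is.length := hlen1 ▸ hj
    have e1 : ∀ k (hk : k < is.length), s.getD k 0 = y.getD (is[k] : ℕ) 0 := by
      intro k hk
      rw [hseq, getD_eq_getElem _ 0 (by simpa using hk), getElem_map,
        getD_eq_getElem y 0 (is[k]).isLt, Fin.getElem_fin]
    have e2 : ∀ k (hk : k < is.length),
        ((is.map (Fin.cast hl)).map t.get).getD k 0 = t.getD (is[k] : ℕ) 0 := by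
      intro k hk
      rw [getD_eq_getElem _ 0 (by simpa using hk), getElem_map, getElem_map,
        getD_eq_getElem t 0 (by rw [← hl]; exact (is[k]).isLt), get_eq_getElem]
      rfl
    rw [e1 i hi', e1 j hj', e2 i hi', e2 j hj']
    exact h.2 _ (is[i]).isLt _ (is[j]).isLt

theorem occursIn_trans {x y w : List ℕ} (h1 : occursIn x y) (h2 : occursIn y w) :
    occursIn x w := by
  obtain ⟨s, hs, hx⟩ := h1
  obtain ⟨t, ht, hy⟩ := h2
  obtain ⟨t', ht', hst⟩ := ordIso_sublist_transport hy (mem_sublists.1 hs)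
  exact occursIn_of_ordIso_sublist (ordIso_trans hx hst) (ht'.trans (mem_sublists.1 ht))

end Aux
section Aux2
open List

theorem isPermList_mem_iff {l : List ℕ} (h : IsPermList l) {x : ℕ} :
    x ∈ l ↔ 1 ≤ x ∧ x ≤ l.length := by
  rw [h.mem_iff]
  simp only [mem_map, mem_range]
  constructor
  · rintro ⟨y, hy, rfl⟩; omega
  · rintro ⟨h1, h2⟩; exact ⟨x - 1, by omega, by omega⟩

theorem isPermList_nodup {l : List ℕ} (h : IsPermList l) : l.Nodup :=
  h.nodup_iff.2 (Nodup.map (fun a b hab => by omega) nodup_range)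

theorem filter_range_lt (n m : ℕ) (h : m ≤ n) :
    (List.range n).filter (fun x => decide (x < m)) = List.range m := by
  induction n with
  | zero => interval_cases m; rfl
  | succ k ih =>
    rw [range_succ, filter_append]
    rcases Nat.lt_or_ge m (k+1) with hm | hm
    · have hmk : m ≤ k := by omega
      rw [ih hmk]
      simp [Nat.not_lt.2 hmk]
    · have hmk : m = k + 1 := by omega
      subst hmk
      have h1 : filter (fun x => decide (x < k + 1)) [k] = [k] := by simp
      have h2 : filter (fun x => decide (x < k + 1)) (range k) = range k :=
        filter_eq_self.2 (fun x hx => by simp [Nat.lt_succ_of_lt (mem_range.1 hx)])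
      rw [h1, h2, ← range_succ]

theorem isPermList_getElem_eq {l : List ℕ} (h : IsPermList l) {i : ℕ} (hi : i < l.length) :
    l[i] = ((List.range l.length).filter
      (fun j => decide (l.getD j 0 < l.getD i 0))).length + 1 := by
  set n := l.length with hn
  set v := l.getD i 0 with hv
  have hvl : l[i] = v := (getD_eq_getElem l 0 hi).symm
  have hvmem : v ∈ l := hvl ▸ getElem_mem hi
  have hvb := (isPermList_mem_iff h).1 hvmem
  -- l as a map over range
  have hmap : (List.range n).map (fun j => l.getD j 0) = l := by
    apply ext_getElem
    · simp [hn]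
    · intro k h1 h2
      rw [getElem_map, getElem_range, getD_eq_getElem l 0 h2]
  have e1 : ((List.range n).filter (fun j => decide (l.getD j 0 < v))).length
      = (l.filter (fun x => decide (x < v))).length := by
    conv_rhs => rw [← hmap]
    rw [filter_map, length_map]
    rfl
  have e2 : (l.filter (fun x => decide (x < v))).length
      = (((List.range n).map (· + 1)).filter (fun x => decide (x < v))).length :=
    ((h.filter (fun x => decide (x < v))).length_eq)
  have e3 : (((List.range n).map (· + 1)).filter (fun x => decide (x < v))) =
      ((List.range n).filter (fun j => decide (j + 1 < v))).map (· + 1) := by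
    rw [filter_map]
    rfl
  have e4 : (List.range n).filter (fun j => decide (j + 1 < v)) =
      (List.range n).filter (fun j => decide (j < v - 1)) := by
    apply filter_congr
    intro x _
    simp only [decide_eq_decide]
    omega
  rw [hvl, e1, e2, e3, length_map, e4, filter_range_lt n (v-1) (by omega), length_range]
  omega

theorem ordIso_perm_eq {z π : List ℕ} (hz : IsPermList z) (hπ : IsPermList π)
    (h : OrdIso z π) : z = π := by
  apply ext_getElem h.1
  intro i h1 h2
  rw [isPermList_getElem_eq hz h1, isPermList_getElem_eq hπ h2]
  have hr : (List.range z.length) = (List.range π.length) := by rw [h.1]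
  congr 1
  rw [← hr]
  apply congrArg
  apply filter_congr
  intro j hj
  have hjz : j < z.length := mem_range.1 hj
  simp only [decide_eq_decide]
  exact h.2 j hjz i h1

theorem mem_permsUpTo_iff {z : List ℕ} {N : ℕ} :
    z ∈ permsUpTo N ↔ IsPermList z ∧ z.length ≤ N := by
  unfold permsUpTo
  rw [mem_flatMap]
  constructor
  · rintro ⟨k, hk, hz⟩
    have hp : z ~ (List.range k).map (· + 1) := mem_permutations.1 hz
    have hl : z.length = k := by rw [hp.length_eq, length_map, length_range]
    exact ⟨by rw [IsPermList, hl]; exact hp, by rw [hl]; exact Nat.lt_succ_iff.1 (mem_range.1 hk)⟩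
  · rintro ⟨h1, h2⟩
    exact ⟨z.length, mem_range.2 (Nat.lt_succ_of_le h2), mem_permutations.2 h1⟩

end Aux2
section Aux3
open List

theorem occursIn_single {z : List ℕ} (hz : z ≠ []) : occursIn [1] z := by
  obtain ⟨x, t, rfl⟩ := exists_cons_of_ne_nil hz
  refine occursIn_of_ordIso_sublist (s := [x]) ⟨rfl, ?_⟩ ((nil_sublist t).cons₂ x)
  intro i hi j hj
  simp only [length_cons, length_nil] at hi hj
  interval_cases i
  interval_cases j
  simp

theorem sum_map_split {α : Type*} (l : List α) (f : α → ℤ) (p : α → Bool) :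
    (l.map f).sum = ((l.filter p).map f).sum + ((l.filter (fun x => !p x)).map f).sum := by
  have hp := filter_append_perm p l
  have := (hp.map f).sum_eq
  rw [← this, map_append, sum_append]

theorem sum_map_eq_count {α : Type*} [BEq α] [LawfulBEq α] (l : List α) (f : α → ℤ) (t : α)
    (h : ∀ x ∈ l, x ≠ t → f x = 0) : (l.map f).sum = (l.count t : ℤ) * f t := by
  induction l with
  | nil => simp
  | cons x xs ih =>
    rw [map_cons, sum_cons, ih (fun y hy => h y (mem_cons_of_mem x hy))]
    by_cases hx : x = t
    · subst hx
      rw [count_cons_self]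
      push_cast
      ring
    · rw [h x mem_cons_self hx, count_cons_of_ne hx]
      ring

theorem sublist_drop_of_not_mem {s l : List ℕ} {v : ℕ} (h : s <+ v :: l) (hv : v ∉ s) :
    s <+ l := by
  rcases sublist_cons_iff.1 h with h' | ⟨r, rfl, _⟩
  · exact h'
  · exact absurd (mem_cons_self (a := v) (l := r)) hv

theorem sublist_cons_of_mem {s l : List ℕ} {v : ℕ} (h : s <+ v :: l) (hv : v ∈ s)
    (hvl : v ∉ l) : ∃ r, s = v :: r ∧ r <+ l := by
  rcases sublist_cons_iff.1 h with h' | ⟨r, rfl, hr⟩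
  · exact absurd (h'.subset hv) hvl
  · exact ⟨r, rfl, hr⟩

theorem sublist_dropLast_of_not_mem {s l : List ℕ} {v : ℕ} (h : s <+ l ++ [v]) (hv : v ∉ s) :
    s <+ l := by
  have h1 : s.reverse <+ v :: l.reverse := by
    have := h.reverse
    rwa [reverse_append, reverse_singleton, singleton_append] at this
  have h2 : s.reverse <+ l.reverse := sublist_drop_of_not_mem h1 (by simpa using hv)
  simpa using h2.reverse

theorem sublist_concat_of_mem {s l : List ℕ} {v : ℕ} (h : s <+ l ++ [v]) (hv : v ∈ s)
    (hvl : v ∉ l) : ∃ r, s = r ++ [v] ∧ r <+ l := by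
  have h1 : s.reverse <+ v :: l.reverse := by
    have := h.reverse
    rwa [reverse_append, reverse_singleton, singleton_append] at this
  obtain ⟨r, hr, hrl⟩ := sublist_cons_of_mem h1 (by simpa using hv) (by simpa using hvl)
  refine ⟨r.reverse, ?_, by simpa using hrl.reverse⟩
  have := congrArg List.reverse hr
  simpa using this

end Aux3
section Aux4
open List

theorem isPermList_one : IsPermList [1] := by
  unfold IsPermList
  simp [List.range_succ]

theorem permsUpTo_succ (m : ℕ) : permsUpTo (m+1) =
    permsUpTo m ++ ((List.range (m+1)).map (· + 1)).permutations := by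
  unfold permsUpTo
  rw [range_succ, flatMap_append]
  simp

/-- Key splitting lemma: if `a` is a permutation of length `n-1` contained in `π`, and every
`z ≤ π` not contained in `a` and different from `π` has `μ [1] z = 0`, then `μ [1] π = 0`. -/
theorem split_lemma (μ : List ℕ → List ℕ → ℤ) (hμ : MoebiusOn μ)
    (π a : List ℕ) (hπ : IsPermList π) (ha : IsPermList a)
    (hlen : a.length + 1 = π.length) (halen : 2 ≤ a.length)
    (haπ : occursIn a π)
    (Hz : ∀ z, IsPermList z → occursIn z π → ¬ occursIn z a → z ≠ π → μ [1] z = 0) :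
    μ [1] π = 0 := by
  have hπne : π ≠ [] := by intro hc; rw [hc] at hlen; simp at hlen
  have hane : a ≠ [] := by intro hc; rw [hc] at halen; simp at halen
  have hμπ := hμ.2 [1] π isPermList_one hπ (occursIn_single hπne)
    (by intro hc; rw [← hc] at hlen; simp only [length_cons, length_nil] at hlen; omega)
  have hμa := hμ.2 [1] a isPermList_one ha (occursIn_single hane)
    (by intro hc; rw [← hc] at halen; simp only [length_cons, length_nil] at halen; omega)
  set q : List ℕ → Bool := fun z => decide (occursIn z a) with hq
  have hsplit := sum_map_split (intervalList [1] π) (μ [1]) q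
  rw [hμπ] at hsplit
  -- the q-part equals the interval of a
  have hqpart : (intervalList [1] π).filter q = intervalList [1] a := by
    unfold intervalList
    rw [filter_filter]
    obtain ⟨m, hm⟩ : ∃ m, π.length = m + 1 := ⟨a.length, hlen.symm⟩
    have hma : a.length = m := by omega
    rw [hm, permsUpTo_succ, filter_append]
    have h2 : ((List.range (m+1)).map (· + 1)).permutations.filter
        (fun z => q z && decide (occursIn [1] z ∧ occursIn z π)) = [] := by
      rw [filter_eq_nil_iff]
      intro z hz
      simp only [hq, Bool.and_eq_true, decide_eq_true_eq, not_and]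
      intro hza _
      have h1 := occursIn_length_le hza
      have h2 : z.length = m + 1 := by
        rw [(mem_permutations.1 hz).length_eq, length_map, length_range]
      omega
    rw [h2, append_nil, hma]
    apply filter_congr
    intro z hz
    have hiff : (occursIn z a ∧ occursIn [1] z ∧ occursIn z π) ↔
        (occursIn [1] z ∧ occursIn z a) := by
      constructor
      · rintro ⟨h1, h2, _⟩; exact ⟨h2, h1⟩
      · rintro ⟨h1, h2⟩; exact ⟨h2, h1, occursIn_trans h2 haπ⟩
    rw [hq]
    rw [show (decide (occursIn z a) && decide (occursIn [1] z ∧ occursIn z π))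
        = decide (occursIn z a ∧ (occursIn [1] z ∧ occursIn z π)) from
        (Bool.decide_and _ _).symm, decide_eq_decide]
    exact hiff
  rw [hqpart, hμa, zero_add] at hsplit
  -- the ¬q part: all terms vanish except copies of π
  set l := (intervalList [1] π).filter (fun x => !q x) with hl
  have hcount : ((l.map (μ [1])).sum) = (l.count π : ℤ) * μ [1] π := by
    apply sum_map_eq_count
    intro z hzl hzπ
    rw [hl, mem_filter] at hzl
    obtain ⟨hz1, hz2⟩ := hzl
    unfold intervalList at hz1
    rw [mem_filter] at hz1
    obtain ⟨hz3, hz4⟩ := hz1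
    rw [decide_eq_true_eq] at hz4
    have hzperm : IsPermList z := (mem_permsUpTo_iff.1 hz3).1
    have hzna : ¬ occursIn z a := by
      intro hc
      rw [hq] at hz2
      simp [hc] at hz2
    exact Hz z hzperm hz4.2 hzna hzπ
  rw [hcount] at hsplit
  have hπmem : π ∈ l := by
    rw [hl, mem_filter]
    constructor
    · unfold intervalList
      rw [mem_filter]
      refine ⟨mem_permsUpTo_iff.2 ⟨hπ, le_refl _⟩, ?_⟩
      rw [decide_eq_true_eq]
      exact ⟨occursIn_single hπne, occursIn_self π⟩
    · rw [hq]
      simp only [Bool.not_eq_true', decide_eq_false_iff_not]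
      intro hc
      have := occursIn_length_le hc
      omega
  have hcpos : 0 < l.count π := count_pos_iff.2 hπmem
  have : (l.count π : ℤ) ≠ 0 := by positivity
  exact (mul_eq_zero.1 hsplit.symm).resolve_left this
end Aux4
section Aux5
open List

theorem getD_mem {l : List ℕ} {i : ℕ} (h : i < l.length) : l.getD i 0 ∈ l := by
  rw [getD_eq_getElem l 0 h]; exact getElem_mem h

theorem isPermList_pair : IsPermList [1, 2] := by
  unfold IsPermList
  simp [List.range_succ]

theorem ordIso_pair {x₀ x₁ y₀ y₁ : ℕ} (hx : x₀ < x₁) (hy : y₀ < y₁) :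
    OrdIso [x₀, x₁] [y₀, y₁] := by
  refine ⟨rfl, fun i hi j hj => ?_⟩
  simp only [length_cons, length_nil] at hi hj
  interval_cases i <;> interval_cases j <;> simp [getD] <;> omega

/-- In case A, `π = 1 :: 2 :: ρ`; the companion permutation `a`. -/
theorem caseA_a_perm {ρ : List ℕ} (hπ : IsPermList (1 :: 2 :: ρ)) :
    IsPermList ((2 :: ρ).map (· - 1)) ∧ occursIn ((2 :: ρ).map (· - 1)) (1 :: 2 :: ρ) := by
  have hnd := isPermList_nodup hπ
  have h1n : (1:ℕ) ∉ 2 :: ρ := (nodup_cons.1 hnd).1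
  have hmem2 : ∀ x ∈ 2 :: ρ, 2 ≤ x := by
    intro x hx
    have h1 := ((isPermList_mem_iff hπ).1 (mem_cons_of_mem 1 hx)).1
    have : x ≠ 1 := fun hc => h1n (hc ▸ hx)
    omega
  constructor
  · set m := ρ.length + 1 with hm
    have hT : (List.range (m+1)).map (· + 1) = 1 :: (List.range m).map (· + 2) := by
      rw [range_succ_eq_map, map_cons, map_map]
      congr 1
    have hπ' : (1 : ℕ) :: 2 :: ρ ~ (List.range (m+1)).map (· + 1) := by
      have : (1 :: 2 :: ρ).length = m + 1 := by simp [hm]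
      rw [IsPermList, this] at hπ
      exact hπ
    rw [hT] at hπ'
    have h2ρ : (2 : ℕ) :: ρ ~ (List.range m).map (· + 2) := hπ'.cons_inv
    have ha : (2 :: ρ).map (· - 1) ~ ((List.range m).map (· + 2)).map (· - 1) :=
      h2ρ.map (· - 1)
    have he : ((List.range m).map (· + 2)).map (· - 1) = (List.range m).map (· + 1) := by
      rw [map_map]
      apply map_congr_left
      intro x _
      simp
    rw [he] at ha
    have hlen : ((2 :: ρ).map (· - 1)).length = m := by simp [hm]
    rw [IsPermList, hlen]
    exact ha
  · refine occursIn_of_ordIso_sublist (ordIso_symm (ordIso_map (2 :: ρ) (· - 1) ?_))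
      (sublist_cons_self 1 (2 :: ρ))
    intro x hx y hy
    have := hmem2 x hx
    have := hmem2 y hy
    show x < y ↔ x - 1 < y - 1
    omega

theorem caseA_forced {ρ : List ℕ} (hρ : ρ ≠ []) (hπ : IsPermList (1 :: 2 :: ρ)) :
    ∀ z, IsPermList z → occursIn z (1 :: 2 :: ρ) →
      ¬ occursIn z ((2 :: ρ).map (· - 1)) → z ≠ (1 :: 2 :: ρ) →
      z.getD 0 0 = 1 ∧ z.getD 1 0 = 2 ∧ 3 ≤ z.length ∧ z.length < (1 :: 2 :: ρ).length := by
  intro z hzperm hocc hna hne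
  set a := (2 :: ρ).map (· - 1) with hadef
  have hnd := isPermList_nodup hπ
  have h1n : (1:ℕ) ∉ 2 :: ρ := (nodup_cons.1 hnd).1
  have h2n : (2:ℕ) ∉ ρ := (nodup_cons.1 (nodup_cons.1 hnd).2).1
  have hmem2 : ∀ x ∈ 2 :: ρ, 2 ≤ x := by
    intro x hx
    have h1 := ((isPermList_mem_iff hπ).1 (mem_cons_of_mem 1 hx)).1
    have : x ≠ 1 := fun hc => h1n (hc ▸ hx)
    omega
  have hmemρ : ∀ x ∈ ρ, 3 ≤ x := by
    intro x hx
    have h1 := hmem2 x (mem_cons_of_mem 2 hx)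
    have : x ≠ 2 := fun hc => h2n (hc ▸ hx)
    omega
  obtain ⟨s, hsmem, hiso⟩ := hocc
  have hs : s <+ 1 :: 2 :: ρ := mem_sublists.1 hsmem
  -- every occurrence must use the letters 1 and 2
  by_cases h1s : (1:ℕ) ∈ s
  case neg =>
    exfalso
    apply hna
    have hs' : s <+ 2 :: ρ := sublist_drop_of_not_mem hs h1s
    have hmono : ∀ x ∈ s, ∀ y ∈ s, (x < y ↔ x - 1 < y - 1) := by
      intro x hx y hy
      have := hmem2 x (hs'.subset hx)
      have := hmem2 y (hs'.subset hy)
      show x < y ↔ x - 1 < y - 1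
      omega
    exact occursIn_of_ordIso_sublist (ordIso_trans hiso (ordIso_map s (· - 1) hmono))
      (hs'.map (· - 1))
  by_cases h2s : (2:ℕ) ∈ s
  case neg =>
    exfalso
    apply hna
    obtain ⟨r, rfl, hr⟩ := sublist_cons_of_mem hs h1s h1n
    have h2r : (2:ℕ) ∉ r := fun hc => h2s (mem_cons_of_mem 1 hc)
    have hrρ : r <+ ρ := sublist_drop_of_not_mem hr h2r
    have hs1ρ : 1 :: r <+ 1 :: ρ := hrρ.cons₂ 1
    set g : ℕ → ℕ := fun x => if x = 1 then 1 else x - 1 with hg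
    have helems : ∀ x ∈ (1:ℕ) :: r, x = 1 ∨ 3 ≤ x := by
      intro x hx
      rcases mem_cons.1 hx with rfl | hx'
      · exact Or.inl rfl
      · exact Or.inr (hmemρ x (hrρ.subset hx'))
    have hmono : ∀ x ∈ (1:ℕ) :: r, ∀ y ∈ (1:ℕ) :: r, (x < y ↔ g x < g y) := by
      intro x hx y hy
      rcases helems x hx with rfl | hx3 <;> rcases helems y hy with rfl | hy3 <;>
        simp only [hg] <;> split_ifs <;> omega
    have hmapg : ((1:ℕ) :: ρ).map g = a := by
      rw [hadef, map_cons, map_cons]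
      congr 1
      apply map_congr_left
      intro x hx
      have := hmemρ x hx
      simp only [hg]
      rw [if_neg (by omega)]
    refine occursIn_of_ordIso_sublist
      (ordIso_trans hiso (ordIso_map (1 :: r) g hmono)) ?_
    rw [← hmapg]
    exact hs1ρ.map g
  -- s = 1 :: 2 :: s₃
  obtain ⟨r, rfl, hr⟩ := sublist_cons_of_mem hs h1s h1n
  have h2r : (2:ℕ) ∈ r := by
    rcases mem_cons.1 h2s with hc | hc
    · omega
    · exact hc
  obtain ⟨s₃, rfl, hs₃⟩ := sublist_cons_of_mem hr h2r h2n
  have hmem₃ : ∀ x ∈ s₃, 3 ≤ x := fun x hx => hmemρ x (hs₃.subset hx)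
  -- if s₃ is empty then z = [1,2] which is contained in a
  by_cases hs3nil : s₃ = []
  case pos =>
    subst hs3nil
    exfalso
    apply hna
    have hz12 : z = [1, 2] := ordIso_perm_eq hzperm isPermList_pair hiso
    obtain ⟨c, ρ', rfl⟩ := exists_cons_of_ne_nil hρ
    have hc3 : 3 ≤ c := hmemρ c mem_cons_self
    have hsub : [1, c - 1] <+ a := by
      rw [hadef, map_cons, map_cons]
      exact ((nil_sublist _).cons₂ _).cons₂ _
    rw [hz12]
    exact occursIn_of_ordIso_sublist (ordIso_pair (by omega) (by omega)) hsub
  -- otherwise |z| ≥ 3 and z must begin with 1, 2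
  have hlen : z.length = s₃.length + 2 := by rw [hiso.1]; simp
  have hlen3 : 3 ≤ z.length := by
    have : s₃.length ≠ 0 := fun hc => hs3nil (length_eq_zero_iff.1 hc)
    omega
  have hzel : ∀ i, i < z.length → 1 ≤ z.getD i 0 ∧ z.getD i 0 ≤ z.length :=
    fun i hi => (isPermList_mem_iff hzperm).1 (getD_mem hi)
  have hslen : (1 :: 2 :: s₃).length = z.length := hiso.1.symm
  -- z₀ = 1
  have hz0lt : ∀ j, j < z.length → 0 < j → z.getD 0 0 < z.getD j 0 := by
    intro j hj hj0
    rw [hiso.2 0 (by omega) j hj]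
    have : (1 :: 2 :: s₃).getD j 0 ∈ 2 :: s₃ := by
      have hj' : j - 1 < (2 :: s₃).length := by
        simp only [length_cons] at hslen ⊢; omega
      have : (1 :: 2 :: s₃).getD j 0 = (2 :: s₃).getD (j-1) 0 := by
        rcases j with _ | j'
        · omega
        · rfl
      rw [this]
      exact getD_mem hj'
    have h2le : 2 ≤ (1 :: 2 :: s₃).getD j 0 := by
      rcases mem_cons.1 this with hc | hc
      · omega
      · have := hmem₃ _ hc; omega
    show (1 :: 2 :: s₃).getD 0 0 < _
    exact h2le
  have hz0 : z.getD 0 0 = 1 := by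
    have h1z : (1:ℕ) ∈ z := (isPermList_mem_iff hzperm).2 ⟨le_refl 1, by omega⟩
    obtain ⟨i, hi, hzi⟩ := mem_iff_getElem.1 h1z
    rcases Nat.eq_zero_or_pos i with rfl | hipos
    · rw [getD_eq_getElem z 0 hi, hzi]
    · exfalso
      have := hz0lt i hi hipos
      rw [getD_eq_getElem z 0 hi, hzi] at this
      have := (hzel 0 (by omega)).1
      omega
  -- z₁ = 2
  have hz1 : z.getD 1 0 = 2 := by
    have h2z : (2:ℕ) ∈ z := (isPermList_mem_iff hzperm).2 ⟨by omega, by omega⟩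
    obtain ⟨i, hi, hzi⟩ := mem_iff_getElem.1 h2z
    have hz01 : z.getD 0 0 < z.getD 1 0 := hz0lt 1 (by omega) (by omega)
    rcases i with _ | _ | i'
    · exfalso
      rw [getD_eq_getElem z 0 hi] at hz0
      omega
    · rw [getD_eq_getElem z 0 hi, hzi]
    · exfalso
      have hcomp := hiso.2 1 (by omega) (i' + 2) hi
      have hs1 : (1 :: 2 :: s₃).getD 1 0 = 2 := rfl
      have hsi : 3 ≤ (1 :: 2 :: s₃).getD (i' + 2) 0 := by
        have hi' : i' < s₃.length := by
          simp only [length_cons] at hslen; omega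
        have : (1 :: 2 :: s₃).getD (i' + 2) 0 = s₃.getD i' 0 := rfl
        rw [this]
        exact hmem₃ _ (getD_mem hi')
      have hlt : z.getD 1 0 < z.getD (i' + 2) 0 := by
        rw [hcomp, hs1]; omega
      rw [getD_eq_getElem z 0 hi, hzi] at hlt
      omega
  refine ⟨hz0, hz1, hlen3, ?_⟩
  -- z is strictly shorter than π
  have hle : z.length ≤ (1 :: 2 :: ρ).length := by
    rw [hiso.1]
    exact hs.length_le
  rcases Nat.lt_or_ge z.length (1 :: 2 :: ρ).length with h | h
  · exact h
  · exfalso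
    have heq : z.length = (1 :: 2 :: ρ).length := le_antisymm hle h
    have hseq : (1 :: 2 :: s₃) = 1 :: 2 :: ρ := hs.eq_of_length (by rw [← hiso.1, heq])
    exact hne (ordIso_perm_eq hzperm hπ (hseq ▸ hiso))
end Aux5
section Aux6
open List

theorem caseB_a_perm {ρ : List ℕ} (m : ℕ) (hm : ρ.length = m)
    (hπ : IsPermList (ρ ++ [m+1, m+2])) :
    IsPermList (ρ ++ [m+1]) ∧ occursIn (ρ ++ [m+1]) (ρ ++ [m+1, m+2]) := by
  constructor
  · have hlenπ : (ρ ++ [m+1, m+2]).length = m + 2 := by simp [hm]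
    rw [IsPermList, hlenπ] at hπ
    have hsplit : (List.range (m+2)).map (· + 1)
        = (List.range (m+1)).map (· + 1) ++ [m+2] := by
      rw [range_succ, map_append]
      rfl
    have hassoc : ρ ++ [m+1, m+2] = (ρ ++ [m+1]) ++ [m+2] := by simp
    rw [hassoc, hsplit] at hπ
    have := (perm_append_right_iff [m+2]).1 hπ
    have hlena : (ρ ++ [m+1]).length = m + 1 := by simp [hm]
    rw [IsPermList, hlena]
    exact this
  · exact occursIn_of_ordIso_sublist (ordIso_refl _)
      ((Sublist.cons₂ _ ((nil_sublist _).cons _)).append_left ρ)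

theorem caseB_forced {ρ : List ℕ} (m : ℕ) (hm : ρ.length = m) (hρ : ρ ≠ [])
    (hπ : IsPermList (ρ ++ [m+1, m+2])) :
    ∀ z, IsPermList z → occursIn z (ρ ++ [m+1, m+2]) →
      ¬ occursIn z (ρ ++ [m+1]) → z ≠ (ρ ++ [m+1, m+2]) →
      z.getD (z.length - 2) 0 = z.length - 1 ∧ z.getD (z.length - 1) 0 = z.length ∧
        3 ≤ z.length ∧ z.length < (ρ ++ [m+1, m+2]).length := by
  intro z hzperm hocc hna hne
  set a := ρ ++ [m+1] with hadef
  have hnd := isPermList_nodup hπ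
  have hdisj : ρ.Disjoint [m+1, m+2] := fun x hx hx2 => (nodup_append.1 hnd).2.2 x hx x hx2 rfl
  have hmemρ : ∀ x ∈ ρ, x ≤ m := by
    intro x hx
    have h1 := ((isPermList_mem_iff hπ).1 (mem_append_left _ hx)).2
    simp only [length_append, hm, length_cons, length_nil] at h1
    have h2 : x ∉ [m+1, m+2] := hdisj hx
    simp only [mem_cons, mem_singleton, not_or] at h2
    omega
  have hm1ρ : (m+1) ∉ ρ := fun hc => by simpa using (hmemρ _ hc)
  have hm2ρ : (m+2) ∉ ρ := fun hc => by simpa using (hmemρ _ hc)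
  have hm2a : (m+2) ∉ a := by
    rw [hadef]
    simp only [mem_append, mem_singleton, not_or]
    exact ⟨hm2ρ, by omega⟩
  obtain ⟨s, hsmem, hiso⟩ := hocc
  have hs : s <+ (ρ ++ [m+1]) ++ [m+2] := by
    have := mem_sublists.1 hsmem
    simpa using this
  by_cases hm2s : (m+2) ∈ s
  case neg =>
    exact absurd (occursIn_of_ordIso_sublist hiso (sublist_dropLast_of_not_mem hs hm2s)) hna
  by_cases hm1s : (m+1) ∈ s
  case neg =>
    exfalso
    apply hna
    obtain ⟨r, rfl, hr⟩ := sublist_concat_of_mem hs hm2s hm2a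
    have hm1r : (m+1) ∉ r := fun hc => hm1s (mem_append_left _ hc)
    have hrρ : r <+ ρ := sublist_dropLast_of_not_mem hr hm1r
    set h : ℕ → ℕ := fun x => min x (m+1) with hh
    have hrel : ∀ x ∈ r ++ [m+2], x ≤ m ∨ x = m + 2 := by
      intro x hx
      rcases mem_append.1 hx with hx | hx
      · exact Or.inl (hmemρ _ (hrρ.subset hx))
      · simp only [mem_singleton] at hx; exact Or.inr hx
    have hmono : ∀ x ∈ r ++ [m+2], ∀ y ∈ r ++ [m+2], (x < y ↔ h x < h y) := by
      intro x hx y hy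
      rcases hrel x hx with h1 | h1 <;> rcases hrel y hy with h2 | h2 <;>
        simp only [hh] <;> omega
    have hmap : (r ++ [m+2]).map h = r ++ [m+1] := by
      rw [map_append]
      congr 1
      · have hid : ∀ x ∈ r, h x = x := by
          intro x hx
          have := hmemρ _ (hrρ.subset hx)
          simp only [hh]
          omega
        rw [map_congr_left hid]; exact map_id' r
      · simp only [hh, map_cons, map_nil]
        congr 1
        omega
    refine occursIn_of_ordIso_sublist (ordIso_trans hiso (ordIso_map _ h hmono)) ?_
    rw [hmap, hadef]
    exact hrρ.append (Sublist.refl _)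
  -- both m+1 and m+2 used: s = s₃ ++ [m+1, m+2]
  obtain ⟨r, rfl, hr⟩ := sublist_concat_of_mem hs hm2s hm2a
  have hm1r : (m+1) ∈ r := by
    rcases mem_append.1 hm1s with hc | hc
    · exact hc
    · simp only [mem_singleton] at hc; omega
  have hm1a' : (m+1) ∉ ρ := hm1ρ
  obtain ⟨s₃, rfl, hs₃⟩ := sublist_concat_of_mem hr hm1r hm1a'
  have hmem₃ : ∀ x ∈ s₃, x ≤ m := fun x hx => hmemρ x (hs₃.subset hx)
  set s := (s₃ ++ [m+1]) ++ [m+2] with hsdef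
  have hslen : s.length = s₃.length + 2 := by simp [hsdef]
  have hzlen : z.length = s₃.length + 2 := by rw [hiso.1, hslen]
  -- getD values of s
  have hsget_last : s.getD (s₃.length + 1) 0 = m + 2 := by
    rw [hsdef, getD_append_right _ _ _ _ (by simp), length_append]
    simp
  have hsget_snd : s.getD s₃.length 0 = m + 1 := by
    rw [hsdef, getD_append _ _ _ _ (by simp), getD_append_right _ _ _ _ (by simp)]
    simp
  have hsget_lt : ∀ j, j < s₃.length → s.getD j 0 ≤ m := by
    intro j hj
    rw [hsdef, getD_append _ _ _ _ (by simp; omega), getD_append _ _ _ _ hj]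
    exact hmem₃ _ (getD_mem hj)
  by_cases hs3nil : s₃ = []
  case pos =>
    exfalso
    apply hna
    subst hs3nil
    have hz12 : z = [1, 2] := by
      refine ordIso_perm_eq hzperm isPermList_pair (ordIso_trans hiso ?_)
      exact ordIso_pair (by omega) (by omega)
    obtain ⟨c, ρ', rfl⟩ := exists_cons_of_ne_nil hρ
    have hc : c ≤ m := hmemρ c mem_cons_self
    have hsub : [c, m+1] <+ a := by
      rw [hadef]
      exact ((sublist_append_right ρ' [m+1]).cons₂ c)
    rw [hz12]
    exact occursIn_of_ordIso_sublist (ordIso_pair (by omega) (by omega)) hsub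
  have hs3pos : 0 < s₃.length := length_pos_iff.2 hs3nil
  set k := z.length with hk
  have hk3 : 3 ≤ k := by omega
  have hzel : ∀ i, i < k → 1 ≤ z.getD i 0 ∧ z.getD i 0 ≤ k :=
    fun i hi => (isPermList_mem_iff hzperm).1 (getD_mem hi)
  -- z (k-1) = k
  have hzlast_gt : ∀ j, j < k - 1 → z.getD j 0 < z.getD (k-1) 0 := by
    intro j hj
    rw [hiso.2 j (by omega) (k-1) (by omega)]
    have hk1 : k - 1 = s₃.length + 1 := by omega
    rw [hk1, hsget_last]
    rcases Nat.lt_or_ge j s₃.length with hj' | hj'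
    · have := hsget_lt j hj'; omega
    · have : j = s₃.length := by omega
      rw [this, hsget_snd]; omega
  have hzlast : z.getD (k-1) 0 = k := by
    have hkz : k ∈ z := (isPermList_mem_iff hzperm).2 ⟨by omega, le_refl _⟩
    obtain ⟨i, hi, hzi⟩ := mem_iff_getElem.1 hkz
    have hig : z.getD i 0 = k := by rw [getD_eq_getElem z 0 hi, hzi]
    rcases Nat.lt_or_ge i (k-1) with hik | hik
    · exfalso
      have := hzlast_gt i hik
      have := (hzel (k-1) (by omega)).2
      omega
    · have : i = k - 1 := by omega
      rw [← this, hig]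
  -- z (k-2) = k-1
  have hzsnd : z.getD (k-2) 0 = k - 1 := by
    have hkz : (k-1) ∈ z := (isPermList_mem_iff hzperm).2 ⟨by omega, by omega⟩
    obtain ⟨i, hi, hzi⟩ := mem_iff_getElem.1 hkz
    have hig : z.getD i 0 = k - 1 := by rw [getD_eq_getElem z 0 hi, hzi]
    have hsndlt : z.getD (k-2) 0 < z.getD (k-1) 0 := hzlast_gt (k-2) (by omega)
    rcases Nat.lt_or_ge i (k-2) with hik | hik
    · exfalso
      -- z i < z (k-2) since s i ≤ m < m+1 = s (k-2)
      have hcomp := hiso.2 i (by omega) (k-2) (by omega)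
      have hk2 : k - 2 = s₃.length := by omega
      have hsi : s.getD i 0 ≤ m := hsget_lt i (by omega)
      rw [hk2, hsget_snd] at hcomp
      have hzik2 : z.getD i 0 < z.getD (k-2) 0 := by
        rw [hk2]; exact hcomp.2 (by omega)
      rw [hig] at hzik2
      rw [hzlast] at hsndlt
      omega
    · rcases Nat.lt_or_ge i (k-1) with hik' | hik'
      · have : i = k - 2 := by omega
        rw [← this, hig]
      · exfalso
        have : i = k - 1 := by omega
        rw [this, hzlast] at hig
        omega
  refine ⟨hzsnd, hzlast, hk3, ?_⟩
  have hle : z.length ≤ (ρ ++ [m+1, m+2]).length := by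
    rw [hiso.1]
    exact (mem_sublists.1 hsmem).length_le
  rcases Nat.lt_or_ge z.length (ρ ++ [m+1, m+2]).length with h | h
  · exact h
  · exfalso
    have heq : z.length = (ρ ++ [m+1, m+2]).length := le_antisymm hle h
    have hseq : s = ρ ++ [m+1, m+2] := by
      apply (mem_sublists.1 hsmem).eq_of_length
      rw [← hiso.1, heq]
    exact hne (ordIso_perm_eq hzperm hπ (hseq ▸ hiso))

end Aux6
section Main
open List

theorem main_aux (μ : List ℕ → List ℕ → ℤ) (hμ : MoebiusOn μ) :
    ∀ n : ℕ, ∀ π : List ℕ, IsPermList π → π.length = n → 2 < n →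
    ((π.getD 0 0 = 1 ∧ π.getD 1 0 = 2) ∨
     (π.getD (n-2) 0 = n - 1 ∧ π.getD (n-1) 0 = n)) → μ [1] π = 0 := by
  intro n
  induction n using Nat.strong_induction_on with
  | _ n IH =>
  intro π hπ hlen h2 hcase
  rcases hcase with ⟨h0, h1⟩ | ⟨h0, h1⟩
  · -- case A : π begins with 1, 2
    rcases π with _ | ⟨x, _ | ⟨y, ρ⟩⟩
    · simp at hlen; omega
    · simp at hlen; omega
    have hx : x = 1 := h0
    have hy : y = 2 := h1
    subst hx; subst hy
    have hρlen : ρ.length = n - 2 := by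
      simp only [length_cons] at hlen; omega
    have hρ : ρ ≠ [] := by
      intro hc
      rw [hc] at hρlen
      simp at hρlen
      omega
    obtain ⟨haperm, haocc⟩ := caseA_a_perm hπ
    apply split_lemma μ hμ _ _ hπ haperm
    · simp
    · simp only [length_map, length_cons]
      omega
    · exact haocc
    · intro z hz hocc hna hzne
      obtain ⟨e0, e1, e3, elt⟩ := caseA_forced hρ hπ z hz hocc hna hzne
      exact IH z.length (by omega) z hz rfl e3 (Or.inl ⟨e0, e1⟩)
  · -- case B : π ends with n-1, n
    set m := n - 2 with hmdef
    have hd2 : (π.drop m).length = 2 := by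
      rw [length_drop, hlen]; omega
    obtain ⟨u, v, huv⟩ : ∃ u v, π.drop m = [u, v] := by
      generalize π.drop m = d at hd2 ⊢
      rcases d with _ | ⟨u, _ | ⟨v, _ | ⟨w, r⟩⟩⟩
      · simp at hd2
      · simp at hd2
      · exact ⟨u, v, rfl⟩
      · simp at hd2
    have hπeq : π = π.take m ++ [u, v] := by
      conv_lhs => rw [← take_append_drop m π]
      rw [huv]
    have hulen : m < π.length := by rw [hlen]; omega
    have hu : u = n - 1 := by
      have hgd : π.getD m 0 = u := by
        have hL : 0 < (π.drop m).length := by omega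
        have e1 : (π.drop m).getD 0 0 = u := by rw [huv]; rfl
        rw [getD_eq_getElem _ 0 hL, List.getElem_drop] at e1
        rw [getD_eq_getElem π 0 hulen]
        simpa using e1
      rw [hgd] at h0
      exact h0
    have hv : v = n := by
      have hvlen : m + 1 < π.length := by rw [hlen]; omega
      have hgd : π.getD (m+1) 0 = v := by
        have hL : 1 < (π.drop m).length := by omega
        have e1 : (π.drop m).getD 1 0 = v := by rw [huv]; rfl
        rw [getD_eq_getElem _ 0 hL, List.getElem_drop] at e1
        rw [getD_eq_getElem π 0 hvlen]
        exact e1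
      have hn1 : n - 1 = m + 1 := by omega
      rw [hn1, hgd] at h1
      exact h1
    set ρ := π.take m with hρdef
    have hρlen : ρ.length = m := by
      rw [hρdef, length_take, hlen]; omega
    have hρne : ρ ≠ [] := by
      intro hc
      have h6 : ρ.length = 0 := by rw [hc]; rfl
      omega
    have hπeq' : π = ρ ++ [m+1, m+2] := by
      have e1 : n - 1 = m + 1 := by omega
      have e2 : n = m + 2 := by omega
      rw [hπeq, hu, hv, e1, e2]
    rw [hπeq'] at hπ ⊢
    obtain ⟨haperm, haocc⟩ := caseB_a_perm m hρlen hπ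
    apply split_lemma μ hμ _ _ hπ haperm
    · simp [hρlen]
    · simp only [length_append, hρlen, length_cons, length_nil]
      omega
    · exact haocc
    · intro z hz hocc hna hzne
      obtain ⟨e0, e1, e3, elt⟩ := caseB_forced m hρlen hρne hπ z hz hocc hna hzne
      refine IH z.length (by rw [hπeq'] at hlen; omega) z hz rfl e3 (Or.inr ⟨e0, e1⟩)

end Main
/-- if `π` (length `n > 2`, one descent) begins with `1,2` or ends with
`n-1, n`, then `μ(1,π) = 0`. -/
theorem moebius_zero_of_ends (μ : List ℕ → List ℕ → ℤ) (hμ : MoebiusOn μ)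
    (π : List ℕ) (n : ℕ) (hn : π.length = n) (h2 : 2 < n)
    (hπ : IsPermList π) (hd : des π = 1)
    (h : (π.getD 0 0 = 1 ∧ π.getD 1 0 = 2) ∨
         (π.getD (n-2) 0 = n - 1 ∧ π.getD (n-1) 0 = n)) :
    μ [1] π = 0 :=
  main_aux μ hμ n π hπ hn h2 h
end
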